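/- Let n ≥ 1 be a natural number, let m_0, ..., m_{q−1} be natural numbers with each m_j > 1, let t and s_0, ..., s_{q−1} be positive rational numbers, and let u be a positive rational number. Then there exists a positive rational number x with u < x such that x·t is an n-th power and, for every j < q, x·s_j is not an m_j-th power, if and only if, for every j < q with m_j dividing n, t^{−1}·s_j is not an m_j-th power. -/

import Mathlib

lemma padicValRat_eq_zero_of_not_dvd {p : ℕ} {r : ℚ} (hn : ¬ p ∣ r.num.natAbs)
    (hd : ¬ p ∣ r.den) : padicValRat p r = 0 := by
  unfold padicValRat padicValInt
  rw [padicValNat.eq_zero_of_not_dvd hn, padicValNat.eq_zero_of_not_dvd hd]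
  simp

/-- Quantifier-elimination lemma for `⟨ℚ⁺; <, ×⟩`: one-sided case. -/
theorem qe_one_sided (n : ℕ) (hn : 1 ≤ n) (q : ℕ) (m : Fin q → ℕ) (hm : ∀ j, 1 < m j)
    (t : ℚ) (ht : 0 < t) (s : Fin q → ℚ) (hs : ∀ j, 0 < s j) (u : ℚ) (hu : 0 < u) :
    (∃ x : ℚ, 0 < x ∧ u < x ∧ (∃ w : ℚ, x * t = w ^ n) ∧
        ∀ j, ¬ ∃ w : ℚ, x * s j = w ^ m j) ↔
      ∀ j, m j ∣ n → ¬ ∃ w : ℚ, t⁻¹ * s j = w ^ m j := by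
  have ht0 : t ≠ 0 := ht.ne'
  constructor
  · rintro ⟨x, hx, hux, ⟨w, hw⟩, hnot⟩ j hdvd ⟨v, hv⟩
    refine hnot j ⟨w ^ (n / m j) * v, ?_⟩
    have hxs : x * s j = x * t * (t⁻¹ * s j) := by field_simp
    rw [hxs, hw, hv, mul_pow, ← pow_mul, Nat.div_mul_cancel hdvd]
  · intro h
    set r : Fin q → ℚ := fun j => t⁻¹ * s j with hr
    have hr0 : ∀ j, r j ≠ 0 := fun j => (mul_pos (inv_pos.2 ht) (hs j)).ne'
    set N : ℕ := ∏ j, (r j).num.natAbs * (r j).den with hN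
    have hN0 : 0 < N := Finset.prod_pos fun j _ =>
      Nat.mul_pos (Int.natAbs_pos.2 (Rat.num_ne_zero.2 (hr0 j))) (r j).pos
    obtain ⟨p, hpN, hp⟩ := Nat.exists_infinite_primes (N + 1)
    haveI : Fact p.Prime := ⟨hp⟩
    have hp1 : 1 < p := hp.one_lt
    have hpnd : ∀ j, ¬ p ∣ (r j).num.natAbs ∧ ¬ p ∣ (r j).den := by
      intro j
      have hdN : (r j).num.natAbs * (r j).den ∣ N :=
        Finset.dvd_prod_of_mem _ (Finset.mem_univ j)
      constructor <;> intro hd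
      · exact absurd (Nat.le_of_dvd hN0 (hd.trans ((Dvd.intro _ rfl).trans hdN)))
          (by omega)
      · exact absurd (Nat.le_of_dvd hN0 (hd.trans ((Dvd.intro_left _ rfl).trans hdN)))
          (by omega)
    have hvr : ∀ j, padicValRat p (r j) = 0 := fun j =>
      padicValRat_eq_zero_of_not_dvd (hpnd j).1 (hpnd j).2
    set M : ℕ := ∏ j, m j with hM
    have hmM : ∀ j, m j ∣ M := fun j => Finset.dvd_prod_of_mem _ (Finset.mem_univ j)
    -- choose exponent
    have hp1Q : (1 : ℚ) < (p : ℚ) := by exact_mod_cast hp1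
    obtain ⟨e, he⟩ := pow_unbounded_of_one_lt (u * t) hp1Q
    set a : ℕ := 1 + M * e with ha
    have hea : e ≤ a * n := by
      have hM1 : 1 ≤ M := Finset.one_le_prod' fun j _ => (hm j).le
      have h1 : e ≤ M * e := Nat.le_mul_of_pos_left e (by omega)
      have h2 : a ≤ a * n := Nat.le_mul_of_pos_right a (by omega)
      omega
    have hpan : u * t < (p : ℚ) ^ (a * n) :=
      he.trans_le (pow_le_pow_right₀ hp1Q.le hea)
    set x : ℚ := (p : ℚ) ^ (a * n) * t⁻¹ with hx
    have hpow0 : ((p : ℚ) ^ (a * n)) ≠ 0 := by positivity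
    have hx0 : 0 < x := by positivity
    refine ⟨x, hx0, ?_, ⟨(p : ℚ) ^ a, ?_⟩, ?_⟩
    · rw [hx, show (p:ℚ) ^ (a*n) * t⁻¹ = (p:ℚ)^(a*n) / t by ring, lt_div_iff₀ ht]
      exact hpan
    · rw [hx, ← pow_mul]
      field_simp
    · intro j ⟨w, hw⟩
      have hxs : x * s j = (p : ℚ) ^ (a * n) * r j := by
        rw [hx, hr]; ring
      have hw0 : w ≠ 0 := by
        intro h0
        rw [h0, zero_pow (by have := hm j; omega : m j ≠ 0)] at hw
        exact (mul_pos hx0 (hs j)).ne' hw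
      by_cases hdvd : m j ∣ n
      · refine h j hdvd ⟨w / (p : ℚ) ^ (a * n / m j), ?_⟩
        have hc : (a * n / m j) * m j = a * n := Nat.div_mul_cancel (hdvd.mul_left a)
        rw [div_pow, ← pow_mul, hc, ← hw, hxs, mul_div_cancel_left₀ _ hpow0]
      · -- valuation argument
        have hv1 : padicValRat p (x * s j) = (a * n : ℤ) := by
          rw [hxs, padicValRat.mul hpow0 (hr0 j), hvr j, add_zero,
            padicValRat.pow (p:ℚ),
            padicValRat.self hp1, mul_one]
          push_cast; ring
        have hv2 : padicValRat p (x * s j) = (m j : ℤ) * padicValRat p w := by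
          rw [hw, padicValRat.pow w]
        have hdvd' : (m j : ℤ) ∣ (a * n : ℤ) := ⟨padicValRat p w, by rw [← hv1, hv2]⟩
        have hdvdn : m j ∣ a * n := by exact_mod_cast hdvd'
        apply hdvd
        have : a * n = n + (M * e) * n := by rw [ha]; ring
        have h2 : m j ∣ (M * e) * n := ((hmM j).mul_right e).mul_right n
        have h3 : a * n - (M * e) * n = n := by omega
        exact h3 ▸ Nat.dvd_sub hdvdn h2
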